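/- A digraph D admits a 1-all-out-degree-reducing 2-partition if and only if every non-trivial terminal strong component of D contains an even directed cycle. -/

import Mathlib

/-- The number of out-neighbours of `v` lying in `S`, i.e. the out-degree of `v` in the
subdigraph induced by `S` (when `v ∈ S`). -/
noncomputable def outDegOn {V : Type*} (A : V → V → Prop) (S : Set V) (v : V) : ℕ :=
  {w | w ∈ S ∧ A v w}.ncard

/-- The out-degree `d⁺_D(v)` of `v` in the digraph with arc relation `A`. -/
noncomputable def outDeg {V : Type*} (A : V → V → Prop) (v : V) : ℕ :=
  {w | A v w}.ncard

/-- The strong component containing `v`: all vertices `w` such that `v` and `w` are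
mutually reachable by directed paths. -/
def strongComp {V : Type*} (A : V → V → Prop) (v : V) : Set V :=
  {w | Relation.ReflTransGen A v w ∧ Relation.ReflTransGen A w v}

/-- `S` is a terminal strong component of the digraph: it is a strong component and no
arc of the digraph leaves it. -/
def IsTerminalSC {V : Type*} (A : V → V → Prop) (S : Set V) : Prop :=
  (∃ v, S = strongComp A v) ∧ ∀ u ∈ S, ∀ w, A u w → w ∈ S

/-- The set `S` contains an even directed cycle (a cyclic sequence of `n ≥ 2`, `n` even,
distinct vertices of `S` with all consecutive arcs present). -/
def HasEvenCycleIn {V : Type*} (A : V → V → Prop) (S : Set V) : Prop :=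
  ∃ n : ℕ, 2 ≤ n ∧ Even n ∧ ∃ f : ZMod n → V,
    Function.Injective f ∧ (∀ i, f i ∈ S) ∧ ∀ i, A (f i) (f (i + 1))

section AuxODR

variable {V : Type*} [Fintype V] {A : V → V → Prop}

/-- A good 2-coloring: every non-sink vertex has an out-neighbour of the other colour. -/
private def GoodCol (A : V → V → Prop) (c : V → Bool) : Prop :=
  ∀ v, (∃ w, A v w) → ∃ w, A v w ∧ c w ≠ c v

private lemma outDegOn_le (A : V → V → Prop) (S : Set V) (v : V) :
    outDegOn A S v ≤ outDeg A v :=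
  Set.ncard_le_ncard (fun w hw => hw.2) (Set.toFinite _)

private lemma outDegOn_lt {S : Set V} {v w₀ : V} (hA : A v w₀) (hw : w₀ ∉ S) :
    outDegOn A S v < outDeg A v := by
  apply Set.ncard_lt_ncard _ (Set.toFinite _)
  refine ⟨fun w hw => hw.2, fun hsub => ?_⟩
  exact hw (hsub hA).1

private lemma exists_outside {S : Set V} {v : V}
    (h : outDegOn A S v < outDeg A v) : ∃ w, A v w ∧ w ∉ S := by
  by_contra hc
  push_neg at hc
  have hEq : {w | A v w} = {w | w ∈ S ∧ A v w} := by
    ext w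
    exact ⟨fun hw => ⟨hc w hw, hw⟩, fun hw => hw.2⟩
  simp only [outDegOn, outDeg] at h
  rw [hEq] at h
  exact lt_irrefl _ h

/-- Forward direction: a good coloring yields even cycles in nontrivial terminal SCCs. -/
private lemma cycles_of_good (c : V → Bool) (hg : GoodCol A c) :
    ∀ S : Set V, IsTerminalSC A S → S.Nontrivial → HasEvenCycleIn A S := by
  intro S hT hnt
  obtain ⟨⟨v₀, rfl⟩, hterm⟩ := hT
  -- every vertex of S has an out-neighbour in S of opposite colour
  classical
  have hstep : ∀ v ∈ strongComp A v₀, ∃ w, A v w ∧ w ∈ strongComp A v₀ ∧ c w = !c v := by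
    intro v hv
    obtain ⟨u, hu, hune⟩ := hnt.exists_ne v
    have hvu : Relation.ReflTransGen A v u := hv.2.trans hu.1
    have hout : ∃ w, A v w := by
      rcases hvu.cases_head with h | ⟨w, hw, _⟩
      · exact absurd h.symm hune
      · exact ⟨w, hw⟩
    obtain ⟨w, hAw, hcw⟩ := hg v hout
    refine ⟨w, hAw, hterm v hv w hAw, ?_⟩
    revert hcw
    cases hw : c w <;> cases hv2 : c v <;> simp
  have : ∃ g : V → V, ∀ v ∈ strongComp A v₀,
      A v (g v) ∧ g v ∈ strongComp A v₀ ∧ c (g v) = !c v := by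
    refine ⟨fun v => if h : v ∈ strongComp A v₀ then (hstep v h).choose else v, ?_⟩
    intro v h
    simp only [dif_pos h]
    exact (hstep v h).choose_spec
  obtain ⟨g, hgspec⟩ := this
  set S := strongComp A v₀ with hSdef
  have hmem : ∀ (k : ℕ) (x : V), x ∈ S → g^[k] x ∈ S := by
    intro k
    induction k with
    | zero => intro x hx; simpa using hx
    | succ k ih =>
        intro x hx
        rw [Function.iterate_succ_apply']
        exact (hgspec _ (ih x hx)).2.1
  have hpar : ∀ (k : ℕ) (x : V), x ∈ S → c (g^[k] x) = if Even k then c x else !c x := by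
    intro k
    induction k with
    | zero => intro x hx; simp
    | succ k ih =>
        intro x hx
        rw [Function.iterate_succ_apply', (hgspec _ (hmem k x hx)).2.2, ih x hx]
        by_cases h : Even k <;> simp [h, Nat.even_add_one]
  obtain ⟨x₀, hx₀⟩ := hnt.nonempty
  obtain ⟨i, j, hij, heq⟩ := Finite.exists_ne_map_eq_of_infinite (fun k : ℕ => g^[k] x₀)
  have hper : ∃ a b : ℕ, a < b ∧ g^[a] x₀ = g^[b] x₀ := by
    rcases hij.lt_or_gt with h | h
    · exact ⟨i, j, h, heq⟩
    · exact ⟨j, i, h, heq.symm⟩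
  obtain ⟨a, b, hab, hper⟩ := hper
  set x := g^[a] x₀ with hxdef
  have hxS : x ∈ S := hmem a x₀ hx₀
  have hP : ∃ m : ℕ, 0 < m ∧ g^[m] x = x := by
    refine ⟨b - a, by omega, ?_⟩
    have : g^[(b - a) + a] x₀ = g^[b - a] (g^[a] x₀) := Function.iterate_add_apply g _ _ _
    rw [show (b - a) + a = b by omega] at this
    rw [hxdef, ← this, ← hper]
  classical
  set p := Nat.find hP with hpdef
  have hp : 0 < p ∧ g^[p] x = x := Nat.find_spec hP
  have hpeven : Even p := by
    by_contra hodd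
    have := hpar p x hxS
    rw [hp.2, if_neg hodd] at this
    cases h : c x <;> rw [h] at this <;> simp at this
  have hp2 : 2 ≤ p := by
    obtain ⟨t, ht⟩ := hpeven
    omega
  have hdist : ∀ i j : ℕ, i < j → j < p → g^[i] x ≠ g^[j] x := by
    intro i j hij hj hEq
    have h1 : g^[(p - j) + j] x = g^[(p - j) + i] x := by
      rw [Function.iterate_add_apply, Function.iterate_add_apply, hEq]
    rw [show (p - j) + j = p by omega, hp.2] at h1
    exact Nat.find_min hP (show p - j + i < p by omega) ⟨by omega, h1.symm⟩
  haveI : NeZero p := ⟨by omega⟩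
  haveI : Fact (1 < p) := ⟨by omega⟩
  refine ⟨p, hp2, hpeven, fun i => g^[i.val] x, ?_, fun i => hmem _ _ hxS, ?_⟩
  · intro i j hEq
    apply ZMod.val_injective p
    rcases Nat.lt_trichotomy i.val j.val with h | h | h
    · exact absurd hEq (hdist _ _ h (ZMod.val_lt j))
    · exact h
    · exact absurd hEq.symm (hdist _ _ h (ZMod.val_lt i))
  · intro i
    have hval : (i + 1).val = (i.val + 1) % p := by
      rw [ZMod.val_add, ZMod.val_one]
    by_cases h : i.val + 1 < p
    · have h2 : (i + 1).val = i.val + 1 := by rw [hval, Nat.mod_eq_of_lt h]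
      show A (g^[i.val] x) (g^[(i+1).val] x)
      rw [h2, Function.iterate_succ_apply']
      exact (hgspec _ (hmem _ _ hxS)).1
    · have hi : i.val + 1 = p := by have := ZMod.val_lt i; omega
      have h2 : (i + 1).val = 0 := by rw [hval, hi, Nat.mod_self]
      show A (g^[i.val] x) (g^[(i+1).val] x)
      rw [h2]
      have hx' : (g^[(0:ℕ)] x) = g (g^[i.val] x) := by
        have hit : g^[i.val + 1] x = g (g^[i.val] x) :=
          Function.iterate_succ_apply' g i.val x
        rw [← hit, hi, hp.2]
        simp
      rw [hx']
      exact (hgspec _ (hmem _ _ hxS)).1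

private lemma exists_terminal_reach (A : V → V → Prop) (v : V) :
    ∃ m, IsTerminalSC A (strongComp A m) ∧ m ∈ strongComp A m ∧
      ∀ s ∈ strongComp A m, Relation.ReflTransGen A v s := by
  classical
  obtain ⟨m, hm, hmin⟩ := Set.exists_min_image {m | Relation.ReflTransGen A v m}
      (fun m => {w | Relation.ReflTransGen A m w}.ncard) (Set.toFinite _)
      ⟨v, Relation.ReflTransGen.refl⟩
  have hmax : ∀ w, Relation.ReflTransGen A m w → Relation.ReflTransGen A w m := by
    intro w hw
    have hsub : {x | Relation.ReflTransGen A w x} ⊆ {x | Relation.ReflTransGen A m x} :=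
      fun x hx => hw.trans hx
    have hwv : w ∈ {m | Relation.ReflTransGen A v m} := hm.trans hw
    have heq : {x | Relation.ReflTransGen A w x} = {x | Relation.ReflTransGen A m x} :=
      Set.eq_of_subset_of_ncard_le hsub (hmin w hwv) (Set.toFinite _)
    have : m ∈ {x | Relation.ReflTransGen A m x} := Relation.ReflTransGen.refl
    rw [← heq] at this
    exact this
  refine ⟨m, ⟨⟨m, rfl⟩, ?_⟩, ⟨Relation.ReflTransGen.refl, Relation.ReflTransGen.refl⟩, ?_⟩
  · intro u hu w hA
    exact ⟨hu.1.tail hA, hmax w (hu.1.tail hA)⟩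
  · intro s hs
    exact hm.trans hs.1

/-- Backward direction: extension of a partial good coloring. -/
private lemma extend_good (hirr : ∀ v, ¬ A v v)
    (hS : ∀ S : Set V, IsTerminalSC A S → S.Nontrivial → HasEvenCycleIn A S) :
    ∀ (n : ℕ) (B : Set V) (c : V → Bool), Bᶜ.ncard ≤ n →
      (∀ v ∈ B, (∃ w, A v w) → ∃ w, w ∈ B ∧ A v w ∧ c w ≠ c v) →
      ∃ c' : V → Bool, GoodCol A c' := by
  intro n
  induction n with
  | zero =>
      intro B c hcard hP
      have hB : B = Set.univ := by
        rw [← Set.compl_empty_iff]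
        exact (Set.ncard_eq_zero (Set.toFinite _)).1 (Nat.le_zero.1 hcard)
      refine ⟨c, fun v hv => ?_⟩
      obtain ⟨w, _, hw2, hw3⟩ := hP v (hB ▸ Set.mem_univ v) hv
      exact ⟨w, hw2, hw3⟩
  | succ n ih =>
      intro B c hcard hP
      by_cases hBu : B = Set.univ
      · refine ⟨c, fun v hv => ?_⟩
        obtain ⟨w, _, hw2, hw3⟩ := hP v (hBu ▸ Set.mem_univ v) hv
        exact ⟨w, hw2, hw3⟩
      · obtain ⟨v₀, hv₀⟩ := Set.ne_univ_iff_exists_notMem B |>.1 hBu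
        by_cases hattach : ∃ v, v ∉ B ∧ ∃ w ∈ B, A v w
        · obtain ⟨v, hvB, w, hwB, hA⟩ := hattach
          classical
          refine ih (insert v B) (Function.update c v (!c w)) ?_ ?_
          · have h1 : (insert v B)ᶜ = Bᶜ \ {v} := by
              ext u; simp [Set.mem_insert_iff, not_or, and_comm]
            rw [h1, Set.ncard_diff_singleton_of_mem (show v ∈ Bᶜ from hvB)]
            have : 0 < Bᶜ.ncard := (Set.ncard_pos (Set.toFinite _)).2 ⟨v, hvB⟩
            omega
          · intro u hu hout
            rcases Set.mem_insert_iff.1 hu with rfl | huB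
            · refine ⟨w, Set.mem_insert_of_mem _ hwB, hA, ?_⟩
              have hwv : w ≠ u := fun h => hvB (h ▸ hwB)
              rw [Function.update_of_ne hwv, Function.update_self]
              cases c w <;> simp
            · obtain ⟨w', hw'B, hw'A, hw'ne⟩ := hP u huB hout
              have h1 : w' ≠ v := fun h => hvB (h ▸ hw'B)
              have h2 : u ≠ v := fun h => hvB (h ▸ huB)
              refine ⟨w', Set.mem_insert_of_mem _ hw'B, hw'A, ?_⟩
              rwa [Function.update_of_ne h1, Function.update_of_ne h2]
        · push_neg at hattach
          have hclosed : ∀ x y, Relation.ReflTransGen A x y → x ∉ B → y ∉ B := by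
            intro x y h
            induction h with
            | refl => exact id
            | tail h1 h2 ih2 =>
                intro hx hy
                exact hattach _ (ih2 hx) _ hy h2
          obtain ⟨m, hterm, hmS, hreach⟩ := exists_terminal_reach A v₀
          have hSB : ∀ s ∈ strongComp A m, s ∉ B :=
            fun s hs => hclosed v₀ s (hreach s hs) hv₀
          by_cases hnt : (strongComp A m).Nontrivial
          · obtain ⟨n', hn2, hne, f, hfinj, hfS, hfA⟩ := hS _ hterm hnt
            haveI : NeZero n' := ⟨by omega⟩
            haveI : Fact (1 < n') := ⟨by omega⟩
            classical
            refine ih (B ∪ Set.range f) (Function.extend f (fun i => decide (i.val % 2 = 0)) c)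
              ?_ ?_
            · have hsub : (B ∪ Set.range f)ᶜ ⊂ Bᶜ := by
                rw [Set.compl_union]
                refine ⟨Set.inter_subset_left, fun hcon => ?_⟩
                have h1 : f 0 ∈ Bᶜ := hSB _ (hfS 0)
                have := hcon h1
                exact this.2 ⟨0, rfl⟩
              have := Set.ncard_lt_ncard hsub (Set.toFinite _)
              omega
            · intro u hu hout
              have hrange : ∀ y ∈ B, ¬∃ i, f i = y := by
                rintro y hy ⟨i, rfl⟩
                exact hSB _ (hfS i) hy
              rcases hu with huB | ⟨i, rfl⟩
              · obtain ⟨w', hw'B, hw'A, hw'ne⟩ := hP u huB hout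
                refine ⟨w', Or.inl hw'B, hw'A, ?_⟩
                rwa [Function.extend_apply' _ _ _ (hrange _ hw'B),
                  Function.extend_apply' _ _ _ (hrange _ huB)]
              · refine ⟨f (i + 1), Or.inr ⟨i + 1, rfl⟩, hfA i, ?_⟩
                rw [hfinj.extend_apply, hfinj.extend_apply]
                have hval : (i + 1).val = (i.val + 1) % n' := by
                  rw [ZMod.val_add, ZMod.val_one]
                have hlt : i.val < n' := ZMod.val_lt i
                obtain ⟨t, ht⟩ := hne
                simp only [ne_eq, decide_eq_decide]
                by_cases h : i.val + 1 < n'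
                · rw [hval, Nat.mod_eq_of_lt h]; omega
                · have hi : i.val + 1 = n' := by omega
                  rw [hval, hi, Nat.mod_self]; omega
          · -- trivial terminal component: m is a sink
            have hsink : ¬∃ w, A m w := by
              rintro ⟨w, hw⟩
              have hwS : w ∈ strongComp A m := hterm.2 m hmS w hw
              have : w = m := by
                rcases Set.not_nontrivial_iff.1 hnt hwS hmS with h
                exact h
              exact hirr m (this ▸ hw)
            refine ih (insert m B) c ?_ ?_
            · have h1 : (insert m B)ᶜ = Bᶜ \ {m} := by
                ext u; simp [Set.mem_insert_iff, not_or, and_comm]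
              have hmB : m ∉ B := hSB m hmS
              rw [h1, Set.ncard_diff_singleton_of_mem (show m ∈ Bᶜ from hmB)]
              have : 0 < Bᶜ.ncard := (Set.ncard_pos (Set.toFinite _)).2 ⟨m, hmB⟩
              omega
            · intro u hu hout
              rcases Set.mem_insert_iff.1 hu with rfl | huB
              · exact absurd hout hsink
              · obtain ⟨w', hw'B, hw'A, hw'ne⟩ := hP u huB hout
                exact ⟨w', Set.mem_insert_of_mem _ hw'B, hw'A, hw'ne⟩

end AuxODR

/-- A digraph `D` admits a 1-all-out-degree-reducing 2-partition
(`d⁺_{D⟨Vᵢ⟩}(v) ≤ max {0, d⁺_D(v) − 1}`, expressed here with truncated subtraction)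
if and only if every non-trivial terminal strong component of `D` contains an even
directed cycle. -/
theorem stmt7 {V : Type*} [Fintype V]
    (A : V → V → Prop) (hirr : ∀ v, ¬ A v v) :
    (∃ V₁ V₂ : Set V, Disjoint V₁ V₂ ∧ V₁ ∪ V₂ = Set.univ ∧
        (∀ v ∈ V₁, outDegOn A V₁ v ≤ outDeg A v - 1) ∧
        (∀ v ∈ V₂, outDegOn A V₂ v ≤ outDeg A v - 1)) ↔
    (∀ S : Set V, IsTerminalSC A S → S.Nontrivial → HasEvenCycleIn A S) := by
  classical
  constructor
  · rintro ⟨V₁, V₂, hdisj, huniv, h1, h2⟩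
    set c : V → Bool := fun v => decide (v ∈ V₁) with hcdef
    have hg : GoodCol A c := by
      intro v hv
      obtain ⟨w₁, hw₁⟩ := hv
      have hpos : 0 < outDeg A v := (Set.ncard_pos (Set.toFinite _)).2 ⟨w₁, hw₁⟩
      have hmem : v ∈ V₁ ∨ v ∈ V₂ := by
        have : v ∈ V₁ ∪ V₂ := huniv ▸ Set.mem_univ v
        exact this
      rcases hmem with hv1 | hv2
      · have hle := h1 v hv1
        have hlt : outDegOn A V₁ v < outDeg A v := by omega
        obtain ⟨w, hAw, hwn⟩ := exists_outside hlt
        refine ⟨w, hAw, ?_⟩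
        simp [hcdef, hwn, hv1]
      · have hle := h2 v hv2
        have hlt : outDegOn A V₂ v < outDeg A v := by omega
        obtain ⟨w, hAw, hwn⟩ := exists_outside hlt
        have hwV1 : w ∈ V₁ := by
          have : w ∈ V₁ ∪ V₂ := huniv ▸ Set.mem_univ w
          rcases this with h | h
          · exact h
          · exact absurd h hwn
        have hvn1 : v ∉ V₁ := fun h => Set.disjoint_left.1 hdisj h hv2
        refine ⟨w, hAw, ?_⟩
        simp [hcdef, hwV1, hvn1]
    exact cycles_of_good c hg
  · intro h
    obtain ⟨c, hc⟩ := extend_good hirr h (Set.univ : Set V)ᶜᶜ.ncard ∅ (fun _ => true)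
      (by simp) (by simp)
    refine ⟨{v | c v = true}, {v | c v = false}, ?_, ?_, ?_, ?_⟩
    · rw [Set.disjoint_left]
      intro v hv1 hv2
      simp only [Set.mem_setOf_eq] at hv1 hv2
      rw [hv1] at hv2; exact Bool.noConfusion hv2
    · ext v; simp only [Set.mem_union, Set.mem_setOf_eq, Set.mem_univ, iff_true]
      cases c v <;> simp
    · intro v hv
      by_cases hout : ∃ w, A v w
      · obtain ⟨w, hAw, hne⟩ := hc v hout
        have hwn : w ∉ {v | c v = true} := by
          simp only [Set.mem_setOf_eq] at hv ⊢
          rw [hv] at hne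
          simpa using hne
        have := outDegOn_lt hAw hwn
        omega
      · have hzero : outDeg A v = 0 := by
          have : {w | A v w} = ∅ := by
            ext w; simp only [Set.mem_setOf_eq, Set.mem_empty_iff_false, iff_false]
            exact fun hw => hout ⟨w, hw⟩
          rw [outDeg, this, Set.ncard_empty]
        have := outDegOn_le A {v | c v = true} v
        omega
    · intro v hv
      by_cases hout : ∃ w, A v w
      · obtain ⟨w, hAw, hne⟩ := hc v hout
        have hwn : w ∉ {v | c v = false} := by
          simp only [Set.mem_setOf_eq] at hv ⊢
          rw [hv] at hne
          simpa using hne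
        have := outDegOn_lt hAw hwn
        omega
      · have hzero : outDeg A v = 0 := by
          have : {w | A v w} = ∅ := by
            ext w; simp only [Set.mem_setOf_eq, Set.mem_empty_iff_false, iff_false]
            exact fun hw => hout ⟨w, hw⟩
          rw [outDeg, this, Set.ncard_empty]
        have := outDegOn_le A {v | c v = false} v
        omega
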